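/- arXiv:1903.06523 — 2 statements merged into one kernel-verified Lean document; each statement's English description precedes it below -/
import Mathlib

section
/- Let μ : ℕ → ℤ satisfy μ(k) > −n for all k ≥ 1 and suppose there exist integers d, k_γ and ℓ₀ ∈ ℕ such that: (a) μ(k_γ ± ℓ) = d ± μ(ℓ) for all 1 ≤ ℓ ≤ ℓ₀; (b) d − n ≤ μ(k_γ) ≤ d; (c) μ(k_γ − ℓ) < μ(k_γ) − 2n and μ(k_γ + ℓ) > μ(k_γ) + 2n for all ℓ ≥ ℓ₀. Then any k with μ(k) = d + n satisfies k = k_γ + ℓ for some ℓ with 1 ≤ ℓ < ℓ₀. -/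
/-- Lemma 3.3: index-counting lemma. -/
theorem stmt_1 (n : ℕ) (hn : 0 < n) (μ : ℤ → ℤ) (d : ℤ) (kγ : ℤ) (ℓ₀ : ℤ) (hℓ₀ : 1 ≤ ℓ₀)
    (hpos : ∀ k : ℤ, 1 ≤ k → -(n : ℤ) < μ k)
    (ha : ∀ ℓ : ℤ, 1 ≤ ℓ → ℓ ≤ ℓ₀ → μ (kγ + ℓ) = d + μ ℓ ∧ μ (kγ - ℓ) = d - μ ℓ)
    (hb₁ : d - n ≤ μ kγ) (hb₂ : μ kγ ≤ d)
    (hc : ∀ ℓ : ℤ, ℓ₀ ≤ ℓ → μ (kγ - ℓ) < μ kγ - 2 * n ∧ μ kγ + 2 * n < μ (kγ + ℓ)) :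
    ∀ k : ℤ, 1 ≤ k → μ k = d + n → ∃ ℓ : ℤ, 1 ≤ ℓ ∧ ℓ < ℓ₀ ∧ k = kγ + ℓ := by
  intro k hk hμ
  set ℓ := k - kγ with hℓdef
  rcases lt_trichotomy ℓ 0 with h | h | h
  · exfalso
    rcases le_or_gt (-ℓ₀) ℓ with h1 | h1
    · have hm1 : 1 ≤ -ℓ := by omega
      have hm2 : -ℓ ≤ ℓ₀ := by omega
      have h2 := (ha (-ℓ) hm1 hm2).2
      have hpos' := hpos (-ℓ) hm1
      rw [show kγ - -ℓ = k by omega] at h2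
      omega
    · have h2 := (hc (-ℓ) (by omega)).1
      rw [show kγ - -ℓ = k by omega] at h2
      omega
  · exfalso
    have hk0 : k = kγ := by omega
    rw [hk0] at hμ
    omega
  · refine ⟨ℓ, by omega, ?_, by omega⟩
    by_contra hge
    push_neg at hge
    have h2 := (hc ℓ hge).2
    rw [show kγ + ℓ = k by omega] at h2
    omega
end

section
/- Consider the formal power series P(t) = t^{d−1} · (1/(1−t²) + t^{d(h+1)−2}/(1−t^{d(h+1)−2})) · (1−t^{dh})/(1−t^d), where d ≥ 2 is even and h ≥ 1. Then the coefficient of t^{dh−1} in P equals h, and the coefficient of t^{dh−1+j(d(h+1)−2)} equals h+1 for every j ≥ 1. -/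
open PowerSeries Finset

/-- Rademacher's Poincaré series of `(ΛN/S¹, N)` in the even-degree case. -/
noncomputable def rademacherSeriesEven (d h : ℕ) : PowerSeries ℚ :=
  X ^ (d - 1) * ((1 - X ^ 2)⁻¹ + X ^ (d * (h + 1) - 2) * (1 - X ^ (d * (h + 1) - 2))⁻¹) *
    ((1 - X ^ (d * h)) * (1 - X ^ d)⁻¹)

lemma aux_const (k : ℕ) (hk : 1 ≤ k) : constantCoeff (1 - X ^ k : PowerSeries ℚ) ≠ 0 := by
  simp [map_pow, zero_pow (by omega : k ≠ 0)]

/-- `(1 - X^k)⁻¹` is the indicator series of multiples of `k`. -/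
lemma aux_inv (k : ℕ) (hk : 1 ≤ k) :
    (1 - X ^ k : PowerSeries ℚ)⁻¹ = mk (fun n => if k ∣ n then 1 else 0) := by
  rw [PowerSeries.inv_eq_iff_mul_eq_one (aux_const k hk)]
  ext n
  rw [mul_sub, mul_one, map_sub, coeff_mul_X_pow']
  rcases Nat.eq_zero_or_pos n with rfl | hn
  · simp [hk, Nat.not_lt.mp]
    intro hkn; omega
  · simp only [coeff_mk, coeff_one, hn.ne', if_false]
    by_cases hdvd : k ∣ n
    · rw [if_pos hdvd, if_pos (Nat.le_of_dvd hn hdvd),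
        if_pos (Nat.dvd_sub hdvd dvd_rfl)]
      ring
    · rw [if_neg hdvd]
      split_ifs with h1 h2
      · exfalso; apply hdvd
        have hne : n - k + k = n := Nat.sub_add_cancel h1
        exact hne ▸ Nat.dvd_add h2 dvd_rfl
      · ring
      · ring

lemma aux_trunc (d h : ℕ) (hd : 1 ≤ d) :
    (1 - X ^ (d * h)) * ((1 - X ^ d : PowerSeries ℚ))⁻¹ =
      ∑ i ∈ Finset.range h, X ^ (d * i) := by
  have hg : (∑ i ∈ Finset.range h, (X : PowerSeries ℚ) ^ (d * i)) * (1 - X ^ d) =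
      1 - X ^ (d * h) := by
    have h1 : (∑ i ∈ Finset.range h, (X : PowerSeries ℚ) ^ (d * i)) =
        ∑ i ∈ Finset.range h, ((X : PowerSeries ℚ) ^ d) ^ i := by
      refine Finset.sum_congr rfl fun i _ => ?_
      rw [pow_mul]
    have h2 := geom_sum_mul ((X : PowerSeries ℚ) ^ d) h
    rw [h1, mul_comm d h, pow_mul]
    linear_combination -h2
  rw [← hg, mul_assoc, PowerSeries.mul_inv_cancel _ (aux_const d hd), mul_one]

lemma aux_expand (d h : ℕ) (hd : 2 ≤ d) (hh : 1 ≤ h) :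
    rademacherSeriesEven d h =
      ∑ i ∈ Finset.range h,
        ((PowerSeries.mk fun n => if 2 ∣ n then (1 : ℚ) else 0) * X ^ (d - 1 + d * i) +
         (PowerSeries.mk fun n => if (d * (h + 1) - 2) ∣ n then (1 : ℚ) else 0) *
           X ^ (d - 1 + (d * (h + 1) - 2) + d * i)) := by
  have hm1 : 1 ≤ d * (h + 1) - 2 := by
    have : 2 * (h + 1) ≤ d * (h + 1) := Nat.mul_le_mul_right _ hd
    omega
  rw [rademacherSeriesEven, aux_inv 2 (by omega), aux_inv _ hm1,
    aux_trunc d h (by omega), Finset.mul_sum]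
  refine Finset.sum_congr rfl fun i _ => ?_
  rw [pow_add, pow_add, pow_add]
  ring

lemma aux_coeff (d h : ℕ) (hd : 2 ≤ d) (hh : 1 ≤ h) (n : ℕ) :
    coeff (R := ℚ) n (rademacherSeriesEven d h) =
      ∑ i ∈ Finset.range h,
        ((if d - 1 + d * i ≤ n ∧ 2 ∣ n - (d - 1 + d * i) then (1 : ℚ) else 0) +
         (if d - 1 + (d * (h + 1) - 2) + d * i ≤ n ∧
             (d * (h + 1) - 2) ∣ n - (d - 1 + (d * (h + 1) - 2) + d * i)
           then (1 : ℚ) else 0)) := by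
  rw [aux_expand d h hd hh, map_sum]
  refine Finset.sum_congr rfl fun i _ => ?_
  rw [map_add, coeff_mul_X_pow', coeff_mul_X_pow']
  simp only [coeff_mk]
  congr 1 <;> (split_ifs <;> simp_all)

/-- the coefficient of `t^{dh-1}` equals `h` and the coefficient of
`t^{dh-1+j(d(h+1)-2)}` equals `h+1` for every `j ≥ 1`. -/
theorem stmt_8 (d h : ℕ) (hd : 2 ≤ d) (hde : Even d) (hh : 1 ≤ h) :
    (coeff (R := ℚ) (d * h - 1)) (rademacherSeriesEven d h) = (h : ℚ) ∧
      ∀ j : ℕ, 1 ≤ j →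
        (coeff (R := ℚ) (d * h - 1 + j * (d * (h + 1) - 2))) (rademacherSeriesEven d h)
          = (h : ℚ) + 1 := by
  have hdvd2 : 2 ∣ d := hde.two_dvd
  have hme : (d * (h + 1) - 2) + 2 = d * h + d := by
    have h1 : d * (h + 1) = d * h + d := by ring
    have h2 : d ≤ d * h := Nat.le_mul_of_pos_right d hh
    omega
  have hdh2 : 2 ∣ d * h := hdvd2.mul_right h
  have hdvdm : 2 ∣ d * (h + 1) - 2 := by omega
  have e3 : d * (h - 1) + d = d * h := by
    have : h - 1 + 1 = h := by omega
    calc d * (h - 1) + d = d * ((h - 1) + 1) := by ring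
      _ = d * h := by rw [this]
  constructor
  · rw [aux_coeff d h hd hh]
    have key : ∀ i ∈ Finset.range h,
        ((if d - 1 + d * i ≤ d * h - 1 ∧ 2 ∣ d * h - 1 - (d - 1 + d * i) then (1 : ℚ) else 0) +
         (if d - 1 + (d * (h + 1) - 2) + d * i ≤ d * h - 1 ∧
             (d * (h + 1) - 2) ∣ d * h - 1 - (d - 1 + (d * (h + 1) - 2) + d * i)
           then (1 : ℚ) else 0)) = 1 := by
      intro i hi
      rw [Finset.mem_range] at hi
      have e1 : d * i + d * (h - 1 - i) + d = d * h := by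
        have hik : i + (h - 1 - i) + 1 = h := by omega
        calc d * i + d * (h - 1 - i) + d = d * (i + (h - 1 - i) + 1) := by ring
          _ = d * h := by rw [hik]
      have hd1 : 2 ∣ d * (h - 1 - i) := hdvd2.mul_right _
      rw [if_pos ⟨by omega, by
          have : d * h - 1 - (d - 1 + d * i) = d * (h - 1 - i) := by omega
          rw [this]; exact hd1⟩,
        if_neg (fun hc => by omega)]
      ring
    rw [Finset.sum_congr rfl key, Finset.sum_const, Finset.card_range, nsmul_eq_mul, mul_one]
  · intro j hj
    rw [aux_coeff d h hd hh]
    have hjm : (d * (h + 1) - 2) ≤ j * (d * (h + 1) - 2) := Nat.le_mul_of_pos_left _ hj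
    have e2 : (j - 1) * (d * (h + 1) - 2) + (d * (h + 1) - 2) = j * (d * (h + 1) - 2) := by
      have h1 : ((j - 1) + 1) * (d * (h + 1) - 2)
          = (j - 1) * (d * (h + 1) - 2) + (d * (h + 1) - 2) := by ring
      have h2 : j - 1 + 1 = j := by omega
      rw [h2] at h1
      omega
    have key : ∀ i ∈ Finset.range h,
        ((if d - 1 + d * i ≤ d * h - 1 + j * (d * (h + 1) - 2) ∧
             2 ∣ d * h - 1 + j * (d * (h + 1) - 2) - (d - 1 + d * i) then (1 : ℚ) else 0) +
         (if d - 1 + (d * (h + 1) - 2) + d * i ≤ d * h - 1 + j * (d * (h + 1) - 2) ∧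
             (d * (h + 1) - 2) ∣
               d * h - 1 + j * (d * (h + 1) - 2) - (d - 1 + (d * (h + 1) - 2) + d * i)
           then (1 : ℚ) else 0)) = 1 + (if i = h - 1 then (1 : ℚ) else 0) := by
      intro i hi
      rw [Finset.mem_range] at hi
      have e1 : d * i + d * (h - 1 - i) + d = d * h := by
        have hik : i + (h - 1 - i) + 1 = h := by omega
        calc d * i + d * (h - 1 - i) + d = d * (i + (h - 1 - i) + 1) := by ring
          _ = d * h := by rw [hik]
      have hd1 : 2 ∣ d * (h - 1 - i) := hdvd2.mul_right _
      have hd2 : 2 ∣ j * (d * (h + 1) - 2) := hdvdm.mul_left j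
      have v1 : d * h - 1 + j * (d * (h + 1) - 2) - (d - 1 + d * i)
          = d * (h - 1 - i) + j * (d * (h + 1) - 2) := by omega
      have v2 : d * h - 1 + j * (d * (h + 1) - 2) - (d - 1 + (d * (h + 1) - 2) + d * i)
          = d * (h - 1 - i) + (j - 1) * (d * (h + 1) - 2) := by omega
      rw [if_pos ⟨by omega, by rw [v1]; exact Nat.dvd_add hd1 hd2⟩]
      congr 1
      by_cases hih : i = h - 1
      · rw [if_pos hih, if_pos]
        refine ⟨by omega, ?_⟩
        rw [v2]
        have : h - 1 - i = 0 := by omega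
        rw [this, mul_zero, zero_add]
        exact dvd_mul_left _ _
      · rw [if_neg hih, if_neg]
        rintro ⟨hle, hdv⟩
        rw [v2] at hdv
        have hdv2 : (d * (h + 1) - 2) ∣ d * (h - 1 - i) := by
          have := Nat.dvd_sub hdv (dvd_mul_left (d * (h + 1) - 2) (j - 1))
          simpa [Nat.add_sub_cancel] using this
        have hkpos : 1 ≤ h - 1 - i := by omega
        have h4 : d ≤ d * (h - 1 - i) := Nat.le_mul_of_pos_right d hkpos
        have h5 : d * (h - 1 - i) ≤ d * (h - 1) := Nat.mul_le_mul_left d (by omega)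
        have h6 : d * (h + 1) - 2 ≤ d * (h - 1 - i) :=
          Nat.le_of_dvd (by omega) hdv2
        omega
    rw [Finset.sum_congr rfl key, Finset.sum_add_distrib, Finset.sum_const,
      Finset.card_range, nsmul_eq_mul, mul_one, Finset.sum_ite_eq' _ _ _,
      if_pos (Finset.mem_range.mpr (by omega))]
end
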